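/- arXiv:2603.04369 — 10 statements merged into one kernel-verified Lean document; each statement's English description precedes it below -/
import Mathlib

section
/- Let d ≥ 1 and let f₀ : ℝ^d → ℝ be everywhere positive and differentiable, and let α ∈ ℝ^d satisfy αᵢ ≠ 0 for every i ∈ {1,…,d}. Then the following are equivalent: (i) there exists β ∈ ℝ^d such that for all θ ∈ ℝ^d, Σ_{i=1}^d αᵢ ∂f₀/∂θᵢ(θ) = f₀(θ) Σ_{i=1}^d βᵢ sin(θᵢ); (ii) there exists γ ∈ ℝ^d such that the function h₀(θ) := f₀(θ) · exp(Σ_{i=1}^d γᵢ cos(θᵢ)) satisfies h₀(θ + t·α) = h₀(θ) for all t ∈ ℝ and all θ ∈ ℝ^d. -/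
open Real

lemma fderiv_apply_sum {d : ℕ} (f₀ : (Fin d → ℝ) → ℝ) (hdiff : Differentiable ℝ f₀)
    (α : Fin d → ℝ) (θ : Fin d → ℝ) :
    fderiv ℝ f₀ θ α = ∑ i, α i * fderiv ℝ f₀ θ (Pi.single i 1) := by
  conv_lhs => rw [pi_eq_sum_univ α]
  rw [map_sum]
  simp only [smul_eq_mul, map_smul]
  exact Finset.sum_congr rfl fun i _ => by
    congr 2
    ext j
    simp [Pi.single_apply, eq_comm]

lemma keyDeriv {d : ℕ} (f₀ : (Fin d → ℝ) → ℝ) (hdiff : Differentiable ℝ f₀)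
    (γ α θ : Fin d → ℝ) (t : ℝ) :
    HasDerivAt (fun t : ℝ => f₀ (θ + t • α) * Real.exp (∑ i, γ i * Real.cos (θ i + t * α i)))
      ((fderiv ℝ f₀ (θ + t • α) α) * Real.exp (∑ i, γ i * Real.cos (θ i + t * α i))
        + f₀ (θ + t • α) * (Real.exp (∑ i, γ i * Real.cos (θ i + t * α i))
            * ∑ i, γ i * (-Real.sin (θ i + t * α i) * α i))) t := by
  have h1 : HasDerivAt (fun t : ℝ => θ + t • α) α t := by
    have := ((hasDerivAt_id t).smul_const α).const_add θ
    simpa using this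
  have h2 : HasDerivAt (fun t : ℝ => f₀ (θ + t • α)) (fderiv ℝ f₀ (θ + t • α) α) t :=
    (hdiff (θ + t • α)).hasFDerivAt.comp_hasDerivAt t h1
  have h3 : HasDerivAt (fun t : ℝ => ∑ i, γ i * Real.cos (θ i + t * α i))
      (∑ i : Fin d, γ i * (-Real.sin (θ i + t * α i) * α i)) t := by
    apply HasDerivAt.fun_sum
    intro i _
    have hi : HasDerivAt (fun t : ℝ => θ i + t * α i) (α i) t := by
      simpa using ((hasDerivAt_id t).mul_const (α i)).const_add (θ i)
    exact hi.cos.const_mul (γ i)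
  exact h2.mul h3.exp

theorem stmt0 (d : ℕ) (hd : 1 ≤ d) (f₀ : (Fin d → ℝ) → ℝ)
    (hpos : ∀ θ, 0 < f₀ θ) (hdiff : Differentiable ℝ f₀)
    (α : Fin d → ℝ) (hα : ∀ i, α i ≠ 0) :
    (∃ β : Fin d → ℝ, ∀ θ : Fin d → ℝ,
        ∑ i, α i * fderiv ℝ f₀ θ (Pi.single i 1) =
          f₀ θ * ∑ i, β i * Real.sin (θ i)) ↔
    (∃ γ : Fin d → ℝ, ∀ (t : ℝ) (θ : Fin d → ℝ),
        f₀ (θ + t • α) * Real.exp (∑ i, γ i * Real.cos (θ i + t * α i)) =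
          f₀ θ * Real.exp (∑ i, γ i * Real.cos (θ i))) := by
  constructor
  · rintro ⟨β, hβ⟩
    refine ⟨fun i => β i / α i, fun t θ => ?_⟩
    set γ : Fin d → ℝ := fun i => β i / α i with hγ
    have hγα : ∀ i, γ i * α i = β i := fun i => div_mul_cancel₀ _ (hα i)
    set F : ℝ → ℝ := fun t => f₀ (θ + t • α) * Real.exp (∑ i, γ i * Real.cos (θ i + t * α i))
      with hF
    have hder : ∀ s : ℝ, HasDerivAt F 0 s := by
      intro s
      have h := keyDeriv f₀ hdiff γ α θ s
      have hθ' : ∀ i, (θ + s • α) i = θ i + s * α i := by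
        intro i; simp [smul_eq_mul]
      have hfd : fderiv ℝ f₀ (θ + s • α) α
          = f₀ (θ + s • α) * ∑ i, β i * Real.sin (θ i + s * α i) := by
        rw [fderiv_apply_sum f₀ hdiff, hβ (θ + s • α)]
        simp only [Pi.add_apply, Pi.smul_apply, smul_eq_mul]
      have hzero : (fderiv ℝ f₀ (θ + s • α) α) * Real.exp (∑ i, γ i * Real.cos (θ i + s * α i))
          + f₀ (θ + s • α) * (Real.exp (∑ i, γ i * Real.cos (θ i + s * α i))
              * ∑ i, γ i * (-Real.sin (θ i + s * α i) * α i)) = 0 := by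
        rw [hfd]
        have : ∑ i : Fin d, γ i * (-Real.sin (θ i + s * α i) * α i)
            = -∑ i, β i * Real.sin (θ i + s * α i) := by
          rw [← Finset.sum_neg_distrib]
          apply Finset.sum_congr rfl
          intro i _
          rw [← hγα i]; ring
        rw [this]; ring
      rw [hzero] at h
      exact h
    have hconst : F t = F 0 := by
      have : ∀ s : ℝ, F s = F 0 := by
        intro s
        have hdF : Differentiable ℝ F := fun s => (hder s).differentiableAt
        have : deriv F = fun _ => 0 := funext fun s => (hder s).deriv
        exact is_const_of_deriv_eq_zero hdF (fun s => (hder s).deriv) s 0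
      exact this t
    have hF0 : F 0 = f₀ θ * Real.exp (∑ i, γ i * Real.cos (θ i)) := by
      simp [hF]
    calc f₀ (θ + t • α) * Real.exp (∑ i, γ i * Real.cos (θ i + t * α i)) = F t := rfl
      _ = F 0 := hconst
      _ = _ := hF0
  · rintro ⟨γ, hγ⟩
    refine ⟨fun i => γ i * α i, fun θ => ?_⟩
    set F : ℝ → ℝ := fun t => f₀ (θ + t • α) * Real.exp (∑ i, γ i * Real.cos (θ i + t * α i))
      with hF
    have hFc : F = fun _ => f₀ θ * Real.exp (∑ i, γ i * Real.cos (θ i)) :=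
      funext fun t => hγ t θ
    have h := keyDeriv f₀ hdiff γ α θ 0
    have h0 : HasDerivAt F 0 0 := hFc ▸ hasDerivAt_const 0 _
    have heq := h.unique h0
    have hsimp : θ + (0 : ℝ) • α = θ := by simp
    rw [hsimp] at heq
    simp only [zero_mul, add_zero] at heq
    have hexp : Real.exp (∑ i, γ i * Real.cos (θ i)) ≠ 0 := Real.exp_ne_zero _
    have hfd : fderiv ℝ f₀ θ α = ∑ i, α i * fderiv ℝ f₀ θ (Pi.single i 1) :=
      fderiv_apply_sum f₀ hdiff α θ
    -- from heq: A * E + f₀ θ * (E * S) = 0 where S = ∑ γ i * (-sin * α i)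
    have hA : fderiv ℝ f₀ θ α = f₀ θ * ∑ i, (γ i * α i) * Real.sin (θ i) := by
      have hS : ∑ i : Fin d, γ i * (-Real.sin (θ i) * α i)
          = -∑ i, (γ i * α i) * Real.sin (θ i) := by
        rw [← Finset.sum_neg_distrib]
        exact Finset.sum_congr rfl fun i _ => by ring
      rw [hS] at heq
      have h2 : (fderiv ℝ f₀ θ α - f₀ θ * ∑ i, γ i * α i * Real.sin (θ i))
          * Real.exp (∑ i, γ i * Real.cos (θ i)) = 0 := by linear_combination heq
      have h3 := (mul_eq_zero.mp h2).resolve_right hexp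
      linarith [h3]
    rw [← hfd, hA]
end

section
/- Let d ≥ 1 and let f₀ : ℝ^d → ℝ be everywhere positive and continuously differentiable. Suppose there exist α ∈ ℝ^d with αᵢ ≠ 0 for all i and γ ∈ ℝ^d such that h₀(θ) := f₀(θ) exp(Σ_{i=1}^d γᵢ cos(θᵢ)) satisfies h₀(θ + t·α) = h₀(θ) for all t ∈ ℝ and θ ∈ ℝ^d. Then the Fisher information matrix I ∈ ℝ^{2d × 2d}, with entries I_{ab} = ∫_{[−π,π]^d} S_a(θ) S_b(θ) f₀(θ) dθ where Sᵢ(θ) = −(∂f₀/∂θᵢ)(θ)/f₀(θ) for i ≤ d and S_{d+j}(θ) = sin(θⱼ) for j ≤ d, is not invertible. -/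
open Real MeasureTheory

theorem stmt2 (d : ℕ) (hd : 1 ≤ d) (f₀ : (Fin d → ℝ) → ℝ)
    (hpos : ∀ θ, 0 < f₀ θ) (hdiff : ContDiff ℝ 1 f₀)
    (α : Fin d → ℝ) (hα : ∀ i, α i ≠ 0) (γ : Fin d → ℝ)
    (hinv : ∀ (t : ℝ) (θ : Fin d → ℝ),
      f₀ (θ + t • α) * Real.exp (∑ i, γ i * Real.cos (θ i + t * α i)) =
        f₀ θ * Real.exp (∑ i, γ i * Real.cos (θ i)))
    (S : (Fin d → ℝ) → (Fin d ⊕ Fin d) → ℝ)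
    (hS : ∀ θ, S θ = Sum.elim
        (fun i => -(fderiv ℝ f₀ θ (Pi.single i 1)) / f₀ θ)
        (fun j => Real.sin (θ j)))
    (I : Matrix (Fin d ⊕ Fin d) (Fin d ⊕ Fin d) ℝ)
    (hI : ∀ a b, I a b =
        ∫ θ in (Set.Icc (fun _ => -π) (fun _ => π) : Set (Fin d → ℝ)),
          S θ a * S θ b * f₀ θ) :
    ¬ IsUnit I := by
  intro hIunit
  classical
  set v : (Fin d ⊕ Fin d) → ℝ := Sum.elim α (fun j => γ j * α j) with hv
  have hdf : Differentiable ℝ f₀ := hdiff.differentiable one_ne_zero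
  -- the key derivative identity
  have hder : ∀ θ : Fin d → ℝ,
      fderiv ℝ f₀ θ α = f₀ θ * ∑ i, γ i * α i * Real.sin (θ i) := by
    intro θ
    have hline : HasDerivAt (fun t : ℝ => θ + t • α) α 0 := by
      simpa using ((hasDerivAt_id (0:ℝ)).smul_const α).const_add θ
    have h1 : HasDerivAt (fun t : ℝ => f₀ (θ + t • α)) (fderiv ℝ f₀ θ α) 0 := by
      have := (hdf θ).hasFDerivAt
      have h2 : HasFDerivAt f₀ (fderiv ℝ f₀ θ) ((fun t : ℝ => θ + t • α) 0) := by
        simpa using this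
      exact h2.comp_hasDerivAt 0 hline
    have hsum : HasDerivAt (fun t : ℝ => ∑ i, γ i * Real.cos (θ i + t * α i))
        (∑ i, γ i * (-Real.sin (θ i) * α i)) 0 := by
      apply HasDerivAt.fun_sum
      intro i _
      have hin : HasDerivAt (fun t : ℝ => θ i + t * α i) (α i) 0 := by
        simpa using ((hasDerivAt_id (0:ℝ)).mul_const (α i)).const_add (θ i)
      have hc : HasDerivAt Real.cos (-Real.sin (θ i + 0 * α i)) (θ i + 0 * α i) :=
        Real.hasDerivAt_cos _
      have := (hc.comp 0 hin).const_mul (γ i)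
      simpa [mul_assoc] using this
    have hexp : HasDerivAt (fun t : ℝ => Real.exp (∑ i, γ i * Real.cos (θ i + t * α i)))
        (Real.exp (∑ i, γ i * Real.cos (θ i)) * ∑ i, γ i * (-Real.sin (θ i) * α i)) 0 := by
      have := hsum.exp
      simpa using this
    have hprod := h1.mul hexp
    have hg : (fun t : ℝ => f₀ (θ + t • α) * Real.exp (∑ i, γ i * Real.cos (θ i + t * α i)))
        = fun _ : ℝ => f₀ θ * Real.exp (∑ i, γ i * Real.cos (θ i)) :=
      funext fun t => hinv t θ
    have h0 : HasDerivAt (fun t : ℝ =>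
        f₀ (θ + t • α) * Real.exp (∑ i, γ i * Real.cos (θ i + t * α i))) 0 0 := by
      rw [hg]; exact hasDerivAt_const _ _
    have heq := hprod.unique h0
    have hE : Real.exp (∑ i, γ i * Real.cos (θ i)) ≠ 0 := Real.exp_ne_zero _
    simp only [zero_mul, add_zero, zero_smul] at heq
    -- heq : fderiv α * E + f₀ θ * (E * Σ γ (-sin) α) = 0
    have : (fderiv ℝ f₀ θ α + f₀ θ * ∑ i, γ i * (-Real.sin (θ i) * α i)) *
        Real.exp (∑ i, γ i * Real.cos (θ i)) = 0 := by
      rw [← heq]; ring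
    have h3 := (mul_eq_zero.mp this).resolve_right hE
    have h4 : f₀ θ * ∑ i, γ i * (-Real.sin (θ i) * α i)
        = - (f₀ θ * ∑ i, γ i * α i * Real.sin (θ i)) := by
      rw [Finset.mul_sum, Finset.mul_sum, ← Finset.sum_neg_distrib]
      exact Finset.sum_congr rfl fun i _ => by ring
    rw [h4] at h3
    linarith
  -- α as a sum of single vectors
  have hα_eq : α = ∑ i, α i • (Pi.single i 1 : Fin d → ℝ) := by
    funext j
    simp [Finset.sum_apply, Pi.single_apply]
  -- pointwise null direction of the score
  have key : ∀ θ : Fin d → ℝ, ∑ b, S θ b * v b = 0 := by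
    intro θ
    rw [Fintype.sum_sum_type]
    have hf0 : f₀ θ ≠ 0 := (hpos θ).ne'
    have hfd : fderiv ℝ f₀ θ α = ∑ i, α i * fderiv ℝ f₀ θ (Pi.single i 1) := by
      conv_lhs => rw [hα_eq]
      rw [map_sum]
      exact Finset.sum_congr rfl fun i _ => by
        rw [(fderiv ℝ f₀ θ).map_smul]; rfl
    have h1 : ∑ i, S θ (Sum.inl i) * v (Sum.inl i)
        = -(∑ i, γ i * α i * Real.sin (θ i)) := by
      have e1 : ∑ i, S θ (Sum.inl i) * v (Sum.inl i)
          = ∑ i, -(α i * fderiv ℝ f₀ θ (Pi.single i 1)) / f₀ θ := by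
        refine Finset.sum_congr rfl fun i _ => ?_
        rw [hS]; simp [hv]; ring
      rw [e1, ← Finset.sum_div]
      conv_lhs => rw [Finset.sum_neg_distrib, ← hfd, hder θ]
      field_simp
    have h2 : ∑ j, S θ (Sum.inr j) * v (Sum.inr j)
        = ∑ i, γ i * α i * Real.sin (θ i) := by
      refine Finset.sum_congr rfl fun j _ => ?_
      rw [hS]; simp [hv]; ring
    rw [h1, h2]; ring
  -- continuity of the score components
  have hScont : ∀ b, Continuous (fun θ => S θ b) := by
    intro b
    cases b with
    | inl i =>
        have : (fun θ => S θ (Sum.inl i))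
            = fun θ => -(fderiv ℝ f₀ θ (Pi.single i 1)) / f₀ θ := by
          funext θ; rw [hS]; rfl
        rw [this]
        have hc : Continuous fun θ => fderiv ℝ f₀ θ (Pi.single i 1) :=
          (hdiff.continuous_fderiv one_ne_zero).clm_apply continuous_const
        exact hc.neg.div hdiff.continuous fun θ => (hpos θ).ne'
    | inr j =>
        have : (fun θ => S θ (Sum.inr j)) = fun θ => Real.sin (θ j) := by
          funext θ; rw [hS]; rfl
        rw [this]
        exact Real.continuous_sin.comp (continuous_apply j)
  set K : Set (Fin d → ℝ) := Set.Icc (fun _ => -π) (fun _ => π) with hK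
  have hKc : IsCompact K := isCompact_Icc
  have hmul : I.mulVec v = 0 := by
    funext a
    have hint : ∀ b, IntegrableOn (fun θ => S θ a * S θ b * f₀ θ * v b) K volume := by
      intro b
      exact (((((hScont a).mul (hScont b)).mul hdiff.continuous).mul
        continuous_const).continuousOn).integrableOn_compact hKc
    have hsum : ∑ b, ∫ θ in K, S θ a * S θ b * f₀ θ * v b
        = ∫ θ in K, ∑ b, S θ a * S θ b * f₀ θ * v b :=
      (integral_finset_sum Finset.univ fun b _ => hint b).symm
    calc I.mulVec v a = ∑ b, I a b * v b := rfl
      _ = ∑ b, ∫ θ in K, S θ a * S θ b * f₀ θ * v b := by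
          refine Finset.sum_congr rfl fun b _ => ?_
          rw [hI, ← MeasureTheory.integral_mul_const]
      _ = ∫ θ in K, ∑ b, S θ a * S θ b * f₀ θ * v b := hsum
      _ = ∫ θ in K, S θ a * f₀ θ * ∑ b, S θ b * v b := by
          refine integral_congr_ae (Filter.Eventually.of_forall fun θ => ?_)
          show ∑ b, S θ a * S θ b * f₀ θ * v b = S θ a * f₀ θ * ∑ b, S θ b * v b
          rw [Finset.mul_sum]
          exact Finset.sum_congr rfl fun b _ => by ring
      _ = 0 := by
          simp only [key, mul_zero, integral_zero]
      _ = (0 : (Fin d ⊕ Fin d) → ℝ) a := rfl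
  have hdet : IsUnit I.det := (Matrix.isUnit_iff_isUnit_det I).mp hIunit
  have hv0 : v = 0 := by
    have := congrArg (fun w => I⁻¹.mulVec w) hmul
    simpa [Matrix.mulVec_mulVec, Matrix.nonsing_inv_mul I hdet] using this
  have : α ⟨0, hd⟩ = 0 := by
    have := congrFun hv0 (Sum.inl ⟨0, hd⟩)
    simpa [hv] using this
  exact hα _ this
end

section
/- Let d ≥ 1, let f₀ : ℝ^d → ℝ be everywhere positive and differentiable, let α ∈ ℝ^d with αᵢ ≠ 0 for all i, let β ∈ ℝ^d, and set γᵢ = βᵢ/αᵢ for i = 1,…,d. Define h₀(θ) = f₀(θ) exp(Σ_{i=1}^d γᵢ cos(θᵢ)). Then Σ_{i=1}^d αᵢ ∂f₀/∂θᵢ(θ) = f₀(θ) Σ_{i=1}^d βᵢ sin(θᵢ) holds for all θ ∈ ℝ^d if and only if Σ_{i=1}^d αᵢ ∂h₀/∂θᵢ(θ) = 0 holds for all θ ∈ ℝ^d. -/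
theorem stmt5 (d : ℕ) (hd : 1 ≤ d) (f₀ : (Fin d → ℝ) → ℝ)
    (hpos : ∀ θ, 0 < f₀ θ) (hdiff : Differentiable ℝ f₀)
    (α : Fin d → ℝ) (hα : ∀ i, α i ≠ 0) (β : Fin d → ℝ) :
    (∀ θ : Fin d → ℝ, ∑ i, α i * fderiv ℝ f₀ θ (Pi.single i 1) =
        f₀ θ * ∑ i, β i * Real.sin (θ i)) ↔
    (∀ θ : Fin d → ℝ, ∑ i, α i *
        fderiv ℝ (fun θ' => f₀ θ' * Real.exp (∑ k, (β k / α k) * Real.cos (θ' k))) θ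
          (Pi.single i 1) = 0) := by
  set γ : Fin d → ℝ := fun k => β k / α k with hγ
  have key : ∀ θ : Fin d → ℝ,
      ∑ i, α i * fderiv ℝ (fun θ' => f₀ θ' * Real.exp (∑ k, γ k * Real.cos (θ' k))) θ
        (Pi.single i 1)
      = Real.exp (∑ k, γ k * Real.cos (θ k)) *
        ((∑ i, α i * fderiv ℝ f₀ θ (Pi.single i 1)) - f₀ θ * ∑ i, β i * Real.sin (θ i)) := by
    intro θ
    have hs : HasFDerivAt (fun θ' : Fin d → ℝ => ∑ k, γ k * Real.cos (θ' k))
        (∑ k, (γ k * -Real.sin (θ k)) • ContinuousLinearMap.proj (R := ℝ) (φ := fun _ : Fin d => ℝ) k) θ := by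
      apply HasFDerivAt.fun_sum
      intro k _
      have h1 : HasFDerivAt (fun θ' : Fin d → ℝ => θ' k)
          (ContinuousLinearMap.proj (R := ℝ) (φ := fun _ : Fin d => ℝ) k) θ :=
        (ContinuousLinearMap.proj (R := ℝ) (φ := fun _ : Fin d => ℝ) k).hasFDerivAt
      have h2 := (Real.hasDerivAt_cos (θ k)).comp_hasFDerivAt θ h1
      have h3 := h2.const_mul (γ k)
      exact h3.congr_fderiv (by module)
    have hexp := hs.exp
    have hmul := (hdiff θ).hasFDerivAt.fun_mul hexp
    rw [hmul.fderiv]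
    set E := Real.exp (∑ k, γ k * Real.cos (θ k)) with hE
    have happ : ∀ i : Fin d,
        (f₀ θ • (E •
            ∑ k, (γ k * -Real.sin (θ k)) • ContinuousLinearMap.proj (R := ℝ) (φ := fun _ : Fin d => ℝ) k)
          + E • fderiv ℝ f₀ θ) (Pi.single i 1)
        = f₀ θ * (E * (γ i * -Real.sin (θ i)))
          + E * fderiv ℝ f₀ θ (Pi.single i 1) := by
      intro i
      have hproj : (∑ k, (γ k * -Real.sin (θ k)) • ContinuousLinearMap.proj (R := ℝ) (φ := fun _ : Fin d => ℝ) k) (Pi.single i 1) = γ i * -Real.sin (θ i) := by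
        rw [ContinuousLinearMap.sum_apply]
        simp [ContinuousLinearMap.proj_apply, Pi.single_apply]
      simp only [ContinuousLinearMap.add_apply, ContinuousLinearMap.coe_smul',
        Pi.smul_apply, hproj, smul_eq_mul]
    have hterm : ∀ i ∈ Finset.univ, α i *
        ((f₀ θ • (E •
            ∑ k, (γ k * -Real.sin (θ k)) • ContinuousLinearMap.proj (R := ℝ) (φ := fun _ : Fin d => ℝ) k)
          + E • fderiv ℝ f₀ θ) (Pi.single i 1))
        = E * (α i * fderiv ℝ f₀ θ (Pi.single i 1)) - E * (f₀ θ * (β i * Real.sin (θ i))) := by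
      intro i _
      rw [happ i]
      have hβ : α i * γ i = β i := by
        rw [hγ, mul_comm, div_mul_cancel₀ _ (hα i)]
      linear_combination (-(f₀ θ) * E * Real.sin (θ i)) * hβ
    rw [Finset.sum_congr rfl hterm, Finset.sum_sub_distrib, ← Finset.mul_sum, ← Finset.mul_sum,
      ← Finset.mul_sum]
    ring
  constructor
  · intro h θ
    rw [key θ, h θ, sub_self, mul_zero]
  · intro h θ
    have := h θ
    rw [key θ] at this
    rcases mul_eq_zero.mp this with h1 | h2
    · exact absurd h1 (Real.exp_ne_zero _)
    · linarith [sub_eq_zero.mp h2]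
end

section
/- Let d ≥ 1, let f₀ : ℝ^d → [0,∞) be measurable with f₀(θ + 2π k) = f₀(θ) for all θ ∈ ℝ^d and k ∈ ℤ^d, f₀(−θ) = f₀(θ) for all θ, and ∫_{[−π,π]^d} f₀(θ) dθ = 1. Let μ ∈ ℝ^d and λ ∈ ℝ^d with Σ_{j=1}^d |λⱼ| ≤ 1. Then the sine-skewed function f_{μ,λ}(θ) := f₀(θ − μ) · (1 + Σ_{j=1}^d λⱼ sin(θⱼ − μⱼ)) satisfies f_{μ,λ}(θ) ≥ 0 for all θ ∈ ℝ^d and ∫_{[−π,π]^d} f_{μ,λ}(θ) dθ = 1; that is, f_{μ,λ} is a probability density on [−π,π]^d. -/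
open Real MeasureTheory Pointwise

theorem stmt6 (d : ℕ) (hd : 1 ≤ d) (f₀ : (Fin d → ℝ) → ℝ)
    (hmeas : Measurable f₀) (hnonneg : ∀ θ, 0 ≤ f₀ θ)
    (hper : ∀ (θ : Fin d → ℝ) (k : Fin d → ℤ),
      f₀ (θ + fun i => 2 * π * (k i : ℝ)) = f₀ θ)
    (heven : ∀ θ, f₀ (-θ) = f₀ θ)
    (hint : ∫ θ in (Set.Icc (fun _ => -π) (fun _ => π) : Set (Fin d → ℝ)), f₀ θ = 1)
    (μ lam : Fin d → ℝ) (hlam : ∑ j, |lam j| ≤ 1) :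
    (∀ θ : Fin d → ℝ,
      0 ≤ f₀ (θ - μ) * (1 + ∑ j, lam j * Real.sin (θ j - μ j))) ∧
    ∫ θ in (Set.Icc (fun _ => -π) (fun _ => π) : Set (Fin d → ℝ)),
      f₀ (θ - μ) * (1 + ∑ j, lam j * Real.sin (θ j - μ j)) = 1 := by
  have h2π : (0:ℝ) < 2 * π := by positivity
  -- the sine-sum is bounded by 1 in absolute value
  have hSle : ∀ θ : Fin d → ℝ, |∑ j, lam j * Real.sin (θ j)| ≤ 1 := by
    intro θ
    calc |∑ j, lam j * Real.sin (θ j)| ≤ ∑ j, |lam j * Real.sin (θ j)| :=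
          Finset.abs_sum_le_sum_abs _ _
      _ ≤ ∑ j, |lam j| := Finset.sum_le_sum fun j _ => by
          rw [abs_mul]
          exact mul_le_of_le_one_right (abs_nonneg _) (Real.abs_sin_le_one _)
      _ ≤ 1 := hlam
  have hg0 : ∀ θ : Fin d → ℝ, 0 ≤ 1 + ∑ j, lam j * Real.sin (θ j) := fun θ => by
    have := neg_le_of_abs_le (hSle θ); linarith
  have hg2 : ∀ θ : Fin d → ℝ, 1 + ∑ j, lam j * Real.sin (θ j) ≤ 2 := fun θ => by
    have := le_of_abs_le (hSle θ); linarith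
  refine ⟨fun θ => mul_nonneg (hnonneg _) (hg0 (θ - μ)), ?_⟩
  -- notation
  set box : Set (Fin d → ℝ) := Set.Icc (fun _ => -π) (fun _ => π) with hboxdef
  set g : (Fin d → ℝ) → ℝ := fun θ => f₀ θ * (1 + ∑ j, lam j * Real.sin (θ j)) with hgdef
  have hint' : ∫ θ in box, g (θ - μ) = ∫ θ in box,
      f₀ (θ - μ) * (1 + ∑ j, lam j * Real.sin (θ j - μ j)) := rfl
  rw [← hint']
  -- measurability
  have hSmeas : Measurable fun θ : Fin d → ℝ => 1 + ∑ j, lam j * Real.sin (θ j) := by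
    apply Measurable.const_add
    exact Finset.measurable_sum _ fun j _ =>
      (Real.measurable_sin.comp (measurable_pi_apply j)).const_mul (lam j)
  have hgmeas : Measurable g := hmeas.mul hSmeas
  -- periodicity of g
  have hg_per : ∀ (x : Fin d → ℝ) (k : Fin d → ℤ), g (x + fun i => 2*π*(k i : ℝ)) = g x := by
    intro x k
    have hsin : ∀ j, Real.sin ((x + fun i => 2*π*(k i : ℝ)) j) = Real.sin (x j) := by
      intro j
      have : (x + fun i => 2*π*(k i : ℝ)) j = x j + (k j : ℝ) * (2*π) := by
        simp [Pi.add_apply]; ring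
      rw [this, Real.sin_add_int_mul_two_pi]
    simp only [hgdef, hper x k, hsin]
  -- the lattice
  let e : (Fin d → ℝ) ≃ₗ[ℝ] (Fin d → ℝ) := LinearEquiv.smulOfNeZero ℝ _ (2*π)⁻¹ (inv_ne_zero h2π.ne')
  let b : Module.Basis (Fin d) ℝ (Fin d → ℝ) := Module.Basis.ofEquivFun e
  have hrepr : ∀ (x : Fin d → ℝ) i, b.repr x i = (2*π)⁻¹ * x i := by
    intro x i
    simp [b, e, Module.Basis.ofEquivFun_repr_apply, LinearEquiv.smulOfNeZero_apply, Units.smul_def]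
  have hbi : ∀ i, b i = fun j => 2*π * (if j = i then (1:ℝ) else 0) := by
    intro i
    ext j
    simp [b, e, Module.Basis.coe_ofEquivFun, LinearEquiv.smulOfNeZero_symm_apply, Function.update_apply,
      Pi.single_apply, Units.smul_def, Units.val_inv_eq_inv_val]
  have hFDeq : ZSpan.fundamentalDomain b = Set.pi Set.univ (fun _ => Set.Ico (0:ℝ) (2*π)) := by
    ext x
    simp only [ZSpan.mem_fundamentalDomain, Set.mem_pi, Set.mem_univ, true_implies, Set.mem_Ico,
      hrepr, inv_mul_eq_div]
    refine forall_congr' fun i => ?_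
    rw [div_lt_one h2π, le_div_iff₀ h2π, zero_mul]
  have hlat : ∀ v ∈ Submodule.span ℤ (Set.range b),
      ∃ k : Fin d → ℤ, v = (fun i => 2*π*(k i : ℝ)) := by
    intro v hv
    induction hv using Submodule.span_induction with
    | mem x hx =>
        obtain ⟨i, rfl⟩ := hx
        exact ⟨fun j => if j = i then 1 else 0,
          by rw [hbi i]; funext j; by_cases h : j = i <;> simp [h]⟩
    | zero => exact ⟨0, by funext i; simp⟩
    | add x y hx hy ihx ihy =>
        obtain ⟨k, rfl⟩ := ihx; obtain ⟨k', rfl⟩ := ihy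
        exact ⟨k + k', by funext i; push_cast [Pi.add_apply]; ring⟩
    | smul n x hx ih =>
        obtain ⟨k, rfl⟩ := ih
        exact ⟨n • k, by funext i; push_cast [Pi.smul_apply, smul_eq_mul, zsmul_eq_mul]; ring⟩
  set L := Submodule.span ℤ (Set.range b) with hL
  have hFD : IsAddFundamentalDomain L (ZSpan.fundamentalDomain b) volume :=
    ZSpan.isAddFundamentalDomain b volume
  haveI : VAddCommClass (Fin d → ℝ) L (Fin d → ℝ) :=
    ⟨fun a v c => by change a + (↑v + c) = ↑v + (a + c); ring⟩
  have hFDt : ∀ w : Fin d → ℝ, IsAddFundamentalDomain L (w +ᵥ ZSpan.fundamentalDomain b) volume :=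
    fun w => hFD.vadd_of_comm w
  -- the box is a.e. equal to a translate of the fundamental domain
  set vπ : Fin d → ℝ := fun _ => -π with hvπ
  have hFDico : (vπ +ᵥ ZSpan.fundamentalDomain b : Set (Fin d → ℝ))
      = Set.pi Set.univ fun _ => Set.Ico (-π) π := by
    rw [hFDeq]
    ext x
    simp only [Set.mem_vadd_set_iff_neg_vadd_mem, vadd_eq_add, Set.mem_pi, Set.mem_univ,
      true_implies, Set.mem_Ico, Pi.add_apply, Pi.neg_apply, hvπ]
    refine forall_congr' fun i => ?_
    constructor <;> intro h <;> constructor <;> linarith [h.1, h.2]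
  have hae : box =ᵐ[volume] (vπ +ᵥ ZSpan.fundamentalDomain b : Set (Fin d → ℝ)) := by
    rw [hFDico, hboxdef, ← Set.pi_univ_Icc]
    have hsub : (Set.pi Set.univ fun _ : Fin d => Set.Ico (-π) π) ⊆
        Set.pi Set.univ fun _ : Fin d => Set.Icc (-π) π :=
      Set.pi_mono fun i _ => Set.Ico_subset_Icc_self
    have hico : volume (Set.pi Set.univ fun _ : Fin d => Set.Ico (-π) π)
        = ∏ _i : Fin d, ENNReal.ofReal (π - -π) := by
      rw [volume_pi_pi]; simp [Real.volume_Ico]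
    have hicc : volume (Set.pi Set.univ fun _ : Fin d => Set.Icc (-π) π)
        = ∏ _i : Fin d, ENNReal.ofReal (π - -π) := by
      rw [volume_pi_pi]; simp [Real.volume_Icc]
    have hfin : volume (Set.pi Set.univ fun _ : Fin d => Set.Ico (-π) π) ≠ ⊤ := by
      rw [hico]; exact (ENNReal.prod_lt_top fun i _ => ENNReal.ofReal_lt_top).ne
    have hmeas' : MeasurableSet (Set.pi Set.univ fun _ : Fin d => Set.Ico (-π) π) :=
      MeasurableSet.univ_pi fun i => measurableSet_Ico
    have h0 : volume ((Set.pi Set.univ fun _ : Fin d => Set.Icc (-π) π) \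
        (Set.pi Set.univ fun _ : Fin d => Set.Ico (-π) π)) = 0 := by
      rw [measure_diff hsub hmeas'.nullMeasurableSet hfin, hico, hicc, tsub_self]
    rw [MeasureTheory.ae_eq_set]
    refine ⟨h0, ?_⟩
    rw [Set.diff_eq_empty.2 hsub]
    simp
  -- invariance of the translated integrand
  haveI : MeasurableVAdd L (Fin d → ℝ) := by
    constructor
    · intro x
      show Measurable fun c : L => (c : Fin d → ℝ) + x
      exact (measurable_subtype_coe).add_const _
  haveI : VAddInvariantMeasure L (Fin d → ℝ) volume := by
    constructor
    intro c s hs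
    show volume ((fun x : Fin d → ℝ => (c : Fin d → ℝ) + x) ⁻¹' s) = volume s
    exact measure_preimage_add volume _ s
  have hh_inv : ∀ (v : L) (x : Fin d → ℝ), g ((v +ᵥ x) - μ) = g (x - μ) := by
    intro v x
    obtain ⟨k, hk⟩ := hlat (v : Fin d → ℝ) v.2
    have : (v +ᵥ x) - μ = (x - μ) + fun i => 2*π*(k i : ℝ) := by
      show ((v : Fin d → ℝ) + x) - μ = (x - μ) + fun i => 2*π*(k i : ℝ)
      rw [hk]; funext i; simp [Pi.add_apply, Pi.sub_apply]; ring
    rw [this, hg_per]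
  -- step 1: translation invariance of the integral
  have step1 : ∫ θ in box, g (θ - μ) = ∫ θ in box, g θ := by
    have e1 : ∫ θ in box, g (θ - μ) =
        ∫ θ in (vπ +ᵥ ZSpan.fundamentalDomain b : Set (Fin d → ℝ)), g (θ - μ) :=
      setIntegral_congr_set hae
    have e2 : ∫ θ in (vπ +ᵥ ZSpan.fundamentalDomain b : Set (Fin d → ℝ)), g (θ - μ)
        = ∫ θ in ((μ + vπ) +ᵥ ZSpan.fundamentalDomain b : Set (Fin d → ℝ)), g (θ - μ) :=
      (hFDt vπ).setIntegral_eq (hFDt (μ + vπ)) hh_inv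
    have himg : (fun x : Fin d → ℝ => x + μ) '' (vπ +ᵥ ZSpan.fundamentalDomain b)
        = ((μ + vπ) +ᵥ ZSpan.fundamentalDomain b : Set (Fin d → ℝ)) := by
      have hμ : (fun x : Fin d → ℝ => x + μ) = (μ +ᵥ ·) := by funext x; simp [add_comm]
      rw [hμ, ← vadd_vadd]
      ext x
      simp [Set.mem_vadd_set_iff_neg_vadd_mem, vadd_eq_add]
    have e3 : ∫ θ in ((μ + vπ) +ᵥ ZSpan.fundamentalDomain b : Set (Fin d → ℝ)), g (θ - μ)
        = ∫ θ in (vπ +ᵥ ZSpan.fundamentalDomain b : Set (Fin d → ℝ)), g θ := by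
      rw [← himg, (measurePreserving_add_right volume μ).setIntegral_image_emb
        (measurableEmbedding_addRight μ) _ _]
      simp
    rw [e1, e2, e3, ← setIntegral_congr_set hae]
  rw [step1]
  -- step 2: split off the odd part
  set φ : (Fin d → ℝ) → ℝ := fun θ => f₀ θ * (∑ j, lam j * Real.sin (θ j)) with hφdef
  have hφmeas : Measurable φ := hmeas.mul (by
    exact Finset.measurable_sum _ fun j _ =>
      (Real.measurable_sin.comp (measurable_pi_apply j)).const_mul (lam j))
  have hf₀int : IntegrableOn f₀ box := by
    by_contra h
    rw [MeasureTheory.integral_undef h] at hint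
    exact one_ne_zero hint.symm
  have hφint : IntegrableOn φ box := by
    refine Integrable.mono hf₀int (hφmeas.aestronglyMeasurable.restrict) ?_
    refine Filter.Eventually.of_forall fun θ => ?_
    rw [Real.norm_eq_abs, Real.norm_eq_abs, hφdef, abs_mul]
    exact mul_le_of_le_one_right (abs_nonneg _) (hSle θ)
  have hsplit : ∫ θ in box, g θ = (∫ θ in box, f₀ θ) + ∫ θ in box, φ θ := by
    rw [← MeasureTheory.integral_add hf₀int hφint]
    refine setIntegral_congr_fun (by exact measurableSet_Icc) fun θ _ => ?_
    simp only [hgdef, hφdef]; ring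
  -- step 3: the odd part integrates to zero
  have hφodd : ∀ θ, φ (-θ) = -φ θ := by
    intro θ
    simp only [hφdef, heven θ, Pi.neg_apply, Real.sin_neg, mul_neg, Finset.sum_neg_distrib]
  have hnegbox : Neg.neg '' box = box := by
    rw [hboxdef]
    ext x
    constructor
    · rintro ⟨y, hy, rfl⟩
      exact ⟨fun i => by simpa [hvπ] using neg_le_neg (hy.2 i), fun i => by simpa [hvπ] using neg_le_neg (hy.1 i)⟩
    · intro hx
      exact ⟨-x, ⟨fun i => by simpa [hvπ] using neg_le_neg (hx.2 i),
        fun i => by simpa [hvπ] using neg_le_neg (hx.1 i)⟩, by simp⟩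
  have hodd0 : ∫ θ in box, φ θ = 0 := by
    have : ∫ θ in box, φ θ = ∫ θ in box, -φ θ := by
      conv_lhs => rw [← hnegbox]
      rw [(Measure.measurePreserving_neg (volume : Measure (Fin d → ℝ))).setIntegral_image_emb
        (MeasurableEquiv.neg (Fin d → ℝ)).measurableEmbedding _ _]
      exact setIntegral_congr_fun (by exact measurableSet_Icc) fun θ _ => hφodd θ
    have h2 : (2:ℝ) * ∫ θ in box, φ θ = 0 := by
      rw [MeasureTheory.integral_neg] at this; linarith
    linarith
  rw [hsplit, hint, hodd0, add_zero]
end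

section
/- Let f₀ : ℝ → ℝ be everywhere positive and differentiable. Then there exists a pair (α, β) ∈ ℝ² with (α, β) ≠ (0, 0) such that α f₀′(θ) = β f₀(θ) sin(θ) for all θ ∈ ℝ, if and only if there exists κ ∈ ℝ such that f₀(θ) = f₀(0) · exp(κ (cos(θ) − 1)) for all θ ∈ ℝ (i.e., f₀ is proportional to a von Mises density). -/
theorem stmt8 (f₀ : ℝ → ℝ) (hpos : ∀ θ, 0 < f₀ θ) (hdiff : Differentiable ℝ f₀) :
    (∃ α β : ℝ, (α, β) ≠ (0, 0) ∧ ∀ θ : ℝ, α * deriv f₀ θ = β * f₀ θ * Real.sin θ) ↔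
    (∃ κ : ℝ, ∀ θ : ℝ, f₀ θ = f₀ 0 * Real.exp (κ * (Real.cos θ - 1))) := by
  constructor
  · rintro ⟨α, β, hne, heq⟩
    have hα : α ≠ 0 := by
      intro h0
      subst h0
      have hβ : β ≠ 0 := by
        intro h; exact hne (by simp [h])
      have := heq (Real.pi / 2)
      simp [Real.sin_pi_div_two] at this
      rcases this with h | h
      · exact hβ h
      · exact (hpos _).ne' h
    set c : ℝ := β / α with hc
    have hderiv : ∀ θ, deriv f₀ θ = c * f₀ θ * Real.sin θ := by
      intro θ
      have := heq θ
      field_simp [hc]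
      rw [hc, div_mul_eq_mul_div, div_mul_eq_mul_div, eq_div_iff hα]; linarith [heq θ]
    set g : ℝ → ℝ := fun θ => f₀ θ * Real.exp (c * (Real.cos θ - 1)) with hg
    have hgd : ∀ θ, HasDerivAt g 0 θ := by
      intro θ
      have h1 : HasDerivAt (fun θ => c * (Real.cos θ - 1)) (c * (-Real.sin θ)) θ :=
        ((Real.hasDerivAt_cos θ).sub_const 1).const_mul c
      have h2 := (hdiff θ).hasDerivAt.mul h1.exp
      have h3 : deriv f₀ θ * Real.exp (c * (Real.cos θ - 1)) +
          f₀ θ * (Real.exp (c * (Real.cos θ - 1)) * (c * (-Real.sin θ))) = 0 := by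
        rw [hderiv θ]; ring
      rw [h3] at h2
      exact h2
    have hconst : ∀ θ, g θ = g 0 :=
      fun θ => is_const_of_deriv_eq_zero (fun x => (hgd x).differentiableAt)
        (fun x => (hgd x).deriv) θ 0
    refine ⟨-c, fun θ => ?_⟩
    have h := hconst θ
    simp only [hg, Real.cos_zero] at h
    have hexp : Real.exp (c * (Real.cos θ - 1)) > 0 := Real.exp_pos _
    have : f₀ θ = f₀ 0 / Real.exp (c * (Real.cos θ - 1)) := by
      rw [eq_div_iff hexp.ne']
      simpa using h
    rw [this, div_eq_mul_inv, ← Real.exp_neg]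
    ring_nf
  · rintro ⟨κ, hκ⟩
    refine ⟨1, -κ, by simp, fun θ => ?_⟩
    have h1 : HasDerivAt (fun θ => κ * (Real.cos θ - 1)) (κ * (-Real.sin θ)) θ :=
      ((Real.hasDerivAt_cos θ).sub_const 1).const_mul κ
    have h2 : HasDerivAt f₀ (f₀ 0 * (Real.exp (κ * (Real.cos θ - 1)) * (κ * (-Real.sin θ)))) θ := by
      have := (h1.exp.const_mul (f₀ 0))
      exact this.congr_of_eventuallyEq (Filter.Eventually.of_forall fun x => (hκ x))
    rw [h2.deriv, hκ θ]
    ring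
end

section
/- Let κ₁, κ₂ ∈ ℝ, let λ ∈ ℝ with λ ≠ 0, let C > 0, and define the Sine density on ℝ² by f_S(θ₁, θ₂) = C · exp(κ₁ cos(θ₁) + κ₂ cos(θ₂) + λ sin(θ₁) sin(θ₂)). If α₁, α₂, β₁, β₂ ∈ ℝ satisfy α₁ ∂f_S/∂θ₁(θ) + α₂ ∂f_S/∂θ₂(θ) = f_S(θ) (β₁ sin(θ₁) + β₂ sin(θ₂)) for all θ = (θ₁, θ₂) ∈ ℝ², then α₁ = α₂ = β₁ = β₂ = 0. -/
theorem stmt11 (κ₁ κ₂ lam : ℝ) (hlam : lam ≠ 0) (C : ℝ) (hC : 0 < C)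
    (fS : ℝ → ℝ → ℝ)
    (hfS : ∀ θ₁ θ₂ : ℝ, fS θ₁ θ₂ =
      C * Real.exp (κ₁ * Real.cos θ₁ + κ₂ * Real.cos θ₂ +
        lam * Real.sin θ₁ * Real.sin θ₂))
    (α₁ α₂ β₁ β₂ : ℝ)
    (h : ∀ θ₁ θ₂ : ℝ,
      α₁ * deriv (fun s => fS s θ₂) θ₁ + α₂ * deriv (fun s => fS θ₁ s) θ₂ =
        fS θ₁ θ₂ * (β₁ * Real.sin θ₁ + β₂ * Real.sin θ₂)) :
    α₁ = 0 ∧ α₂ = 0 ∧ β₁ = 0 ∧ β₂ = 0 := by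
  have key : ∀ θ₁ θ₂ : ℝ,
      α₁ * (κ₁ * (-Real.sin θ₁) + lam * Real.cos θ₁ * Real.sin θ₂) +
        α₂ * (κ₂ * (-Real.sin θ₂) + lam * Real.sin θ₁ * Real.cos θ₂) =
        β₁ * Real.sin θ₁ + β₂ * Real.sin θ₂ := by
    intro θ₁ θ₂
    have hE : (0:ℝ) < C * Real.exp (κ₁ * Real.cos θ₁ + κ₂ * Real.cos θ₂ +
        lam * Real.sin θ₁ * Real.sin θ₂) := by positivity
    set E := C * Real.exp (κ₁ * Real.cos θ₁ + κ₂ * Real.cos θ₂ +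
        lam * Real.sin θ₁ * Real.sin θ₂) with hEdef
    have hd1 : HasDerivAt (fun s => fS s θ₂)
        (E * (κ₁ * (-Real.sin θ₁) + lam * Real.cos θ₁ * Real.sin θ₂)) θ₁ := by
      have hfun : (fun s => fS s θ₂) = fun s =>
          C * Real.exp (κ₁ * Real.cos s + κ₂ * Real.cos θ₂ +
            lam * Real.sin s * Real.sin θ₂) := funext fun s => hfS s θ₂
      rw [hfun]
      have h1 : HasDerivAt (fun s => κ₁ * Real.cos s + κ₂ * Real.cos θ₂ +
          lam * Real.sin s * Real.sin θ₂)
          (κ₁ * (-Real.sin θ₁) + lam * Real.cos θ₁ * Real.sin θ₂) θ₁ := by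
        have := (((Real.hasDerivAt_cos θ₁).const_mul κ₁).add_const
          (κ₂ * Real.cos θ₂)).add
          (((Real.hasDerivAt_sin θ₁).const_mul lam).mul_const (Real.sin θ₂))
        exact this.congr_deriv (by ring)
      have := (h1.exp.const_mul C)
      exact this.congr_deriv (by rw [hEdef]; ring)
    have hd2 : HasDerivAt (fun s => fS θ₁ s)
        (E * (κ₂ * (-Real.sin θ₂) + lam * Real.sin θ₁ * Real.cos θ₂)) θ₂ := by
      have hfun : (fun s => fS θ₁ s) = fun s =>
          C * Real.exp (κ₁ * Real.cos θ₁ + κ₂ * Real.cos s +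
            lam * Real.sin θ₁ * Real.sin s) := funext fun s => hfS θ₁ s
      rw [hfun]
      have h1 : HasDerivAt (fun s => κ₁ * Real.cos θ₁ + κ₂ * Real.cos s +
          lam * Real.sin θ₁ * Real.sin s)
          (κ₂ * (-Real.sin θ₂) + lam * Real.sin θ₁ * Real.cos θ₂) θ₂ := by
        have := (((Real.hasDerivAt_cos θ₂).const_mul κ₂).const_add
          (κ₁ * Real.cos θ₁)).add
          ((Real.hasDerivAt_sin θ₂).const_mul (lam * Real.sin θ₁))
        exact this.congr_deriv (by ring)
      have := (h1.exp.const_mul C)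
      exact this.congr_deriv (by rw [hEdef]; ring)
    have heq := h θ₁ θ₂
    rw [hd1.deriv, hd2.deriv, hfS θ₁ θ₂, ← hEdef] at heq
    have : E * (α₁ * (κ₁ * (-Real.sin θ₁) + lam * Real.cos θ₁ * Real.sin θ₂) +
        α₂ * (κ₂ * (-Real.sin θ₂) + lam * Real.sin θ₁ * Real.cos θ₂)) =
        E * (β₁ * Real.sin θ₁ + β₂ * Real.sin θ₂) := by
      linarith [heq]
    exact mul_left_cancel₀ (ne_of_gt hE) this
  have k1 := key (Real.pi / 2) 0
  have k2 := key (Real.pi / 2) Real.pi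
  have k3 := key 0 (Real.pi / 2)
  have k4 := key Real.pi (Real.pi / 2)
  simp [Real.sin_pi_div_two, Real.cos_pi_div_two, Real.sin_pi, Real.cos_pi] at k1 k2 k3 k4
  have hα₂ : α₂ = 0 := by
    have : α₂ * lam = 0 := by linarith
    rcases mul_eq_zero.mp this with h' | h'
    · exact h'
    · exact absurd h' hlam
  have hα₁ : α₁ = 0 := by
    have : α₁ * lam = 0 := by linarith
    rcases mul_eq_zero.mp this with h' | h'
    · exact h'
    · exact absurd h' hlam
  refine ⟨hα₁, hα₂, ?_, ?_⟩
  · subst hα₁ hα₂; linarith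
  · subst hα₁ hα₂; linarith
end

section
/- Let d ≥ 2, κ ∈ ℝ^d, and let Λ ∈ ℝ^{d×d} be symmetric with Λ_{ii} = 0 for all i, such that for every i ∈ {1,…,d} there exists j ≠ i with Λ_{ij} ≠ 0. Let C > 0 and define the multivariate Sine density f(θ) = C · exp(Σ_{i=1}^d κᵢ cos(θᵢ) + (1/2) Σ_{i=1}^d Σ_{j=1}^d Λ_{ij} sin(θᵢ) sin(θⱼ)) for θ ∈ ℝ^d. If α, β ∈ ℝ^d satisfy Σ_{i=1}^d αᵢ ∂f/∂θᵢ(θ) = f(θ) Σ_{i=1}^d βᵢ sin(θᵢ) for all θ ∈ ℝ^d, then α = 0 and β = 0. -/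
open Real Finset

set_option maxHeartbeats 1000000 in
theorem stmt12 (d : ℕ) (hd : 2 ≤ d) (κ : Fin d → ℝ)
    (Λ : Matrix (Fin d) (Fin d) ℝ) (hsymm : Λ.IsSymm) (hdiag : ∀ i, Λ i i = 0)
    (hrow : ∀ i : Fin d, ∃ j : Fin d, j ≠ i ∧ Λ i j ≠ 0)
    (C : ℝ) (hC : 0 < C) (f : (Fin d → ℝ) → ℝ)
    (hf : ∀ θ : Fin d → ℝ, f θ = C * Real.exp (∑ i, κ i * Real.cos (θ i) +
      (1 / 2) * ∑ i, ∑ j, Λ i j * Real.sin (θ i) * Real.sin (θ j)))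
    (α β : Fin d → ℝ)
    (h : ∀ θ : Fin d → ℝ, ∑ i, α i * fderiv ℝ f θ (Pi.single i 1) =
      f θ * ∑ i, β i * Real.sin (θ i)) :
    α = 0 ∧ β = 0 := by
  classical
  have hfpos : ∀ θ, 0 < f θ := fun θ => by rw [hf]; positivity
  have hder : ∀ (θ : Fin d → ℝ) (i : Fin d),
      fderiv ℝ f θ (Pi.single i 1) =
        f θ * (-(κ i * Real.sin (θ i)) + Real.cos (θ i) * ∑ l, Λ i l * Real.sin (θ l)) := by
    intro θ i
    set g : (Fin d → ℝ) → ℝ := fun θ => ∑ k, κ k * Real.cos (θ k) +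
        (1 / 2) * ∑ k, ∑ l, Λ k l * Real.sin (θ k) * Real.sin (θ l) with hgdef
    have hproj : ∀ k : Fin d, HasFDerivAt (fun θ : Fin d → ℝ => θ k)
        (ContinuousLinearMap.proj (R := ℝ) (φ := fun _ : Fin d => ℝ) k) θ :=
      fun k => (ContinuousLinearMap.proj (R := ℝ) (φ := fun _ : Fin d => ℝ) k).hasFDerivAt
    have hsin : ∀ k, HasFDerivAt (fun θ : Fin d → ℝ => Real.sin (θ k))
        (Real.cos (θ k) • ContinuousLinearMap.proj (R := ℝ) (φ := fun _ : Fin d => ℝ) k) θ :=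
      fun k => by have := (Real.hasDerivAt_sin (θ k)).comp_hasFDerivAt θ (hproj k); exact this
    have hcos : ∀ k, HasFDerivAt (fun θ : Fin d → ℝ => Real.cos (θ k))
        ((-Real.sin (θ k)) • ContinuousLinearMap.proj (R := ℝ) (φ := fun _ : Fin d => ℝ) k) θ :=
      fun k => by have := (Real.hasDerivAt_cos (θ k)).comp_hasFDerivAt θ (hproj k); exact this
    have h1 : HasFDerivAt (fun θ : Fin d → ℝ => ∑ k, κ k * Real.cos (θ k))
        (∑ k, κ k • ((-Real.sin (θ k)) • ContinuousLinearMap.proj (R := ℝ) (φ := fun _ : Fin d => ℝ) k)) θ :=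
      HasFDerivAt.fun_sum (fun k _ => (hcos k).const_mul (κ k))
    have h2 : HasFDerivAt (fun θ : Fin d → ℝ => ∑ k, ∑ l, Λ k l * Real.sin (θ k) * Real.sin (θ l))
        (∑ k, ∑ l, ((Λ k l * Real.sin (θ k)) • (Real.cos (θ l) • ContinuousLinearMap.proj (R := ℝ) (φ := fun _ : Fin d => ℝ) l)
          + Real.sin (θ l) • (Λ k l • (Real.cos (θ k) • ContinuousLinearMap.proj (R := ℝ) (φ := fun _ : Fin d => ℝ) k)))) θ :=
      HasFDerivAt.fun_sum (fun k _ => HasFDerivAt.fun_sum (fun l _ =>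
        ((hsin k).const_mul (Λ k l)).mul (hsin l)))
    have hG : HasFDerivAt g
        ((∑ k, κ k • ((-Real.sin (θ k)) • ContinuousLinearMap.proj (R := ℝ) (φ := fun _ : Fin d => ℝ) k))
          + (1/2 : ℝ) • (∑ k, ∑ l, ((Λ k l * Real.sin (θ k)) • (Real.cos (θ l) • ContinuousLinearMap.proj (R := ℝ) (φ := fun _ : Fin d => ℝ) l)
          + Real.sin (θ l) • (Λ k l • (Real.cos (θ k) • ContinuousLinearMap.proj (R := ℝ) (φ := fun _ : Fin d => ℝ) k))))) θ :=
      h1.add (h2.const_mul (1/2 : ℝ))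
    have hfd : HasFDerivAt f (C • (Real.exp (g θ) •
        ((∑ k, κ k • ((-Real.sin (θ k)) • ContinuousLinearMap.proj (R := ℝ) (φ := fun _ : Fin d => ℝ) k))
          + (1/2 : ℝ) • (∑ k, ∑ l, ((Λ k l * Real.sin (θ k)) • (Real.cos (θ l) • ContinuousLinearMap.proj (R := ℝ) (φ := fun _ : Fin d => ℝ) l)
          + Real.sin (θ l) • (Λ k l • (Real.cos (θ k) • ContinuousLinearMap.proj (R := ℝ) (φ := fun _ : Fin d => ℝ) k)))))))
        θ := by
      have hfg : f = fun θ => C * Real.exp (g θ) := funext hf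
      rw [hfg]
      exact ((Real.hasDerivAt_exp (g θ)).comp_hasFDerivAt θ hG).const_mul C
    rw [hfd.fderiv, hf θ]
    rw [show (∑ k, κ k * Real.cos (θ k) +
        (1 / 2) * ∑ k, ∑ l, Λ k l * Real.sin (θ k) * Real.sin (θ l)) = g θ from rfl]
    simp only [ContinuousLinearMap.smul_apply, ContinuousLinearMap.add_apply,
      ContinuousLinearMap.coe_sum', Finset.sum_apply, ContinuousLinearMap.proj_apply,
      smul_eq_mul, Pi.single_apply]
    have e1 : ∑ k, κ k * (-Real.sin (θ k) * (if k = i then (1:ℝ) else 0)) = -(κ i * Real.sin (θ i)) := by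
      rw [Finset.sum_eq_single i] <;> simp +contextual
    have e2 : ∑ k, ∑ l, ((Λ k l * Real.sin (θ k)) * (Real.cos (θ l) * (if l = i then (1:ℝ) else 0))
        + Real.sin (θ l) * (Λ k l * (Real.cos (θ k) * (if k = i then (1:ℝ) else 0))))
        = 2 * (Real.cos (θ i) * ∑ l, Λ i l * Real.sin (θ l)) := by
      have step : ∀ k, ∑ l, ((Λ k l * Real.sin (θ k)) * (Real.cos (θ l) * (if l = i then (1:ℝ) else 0))
          + Real.sin (θ l) * (Λ k l * (Real.cos (θ k) * (if k = i then (1:ℝ) else 0))))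
          = (Λ k i * Real.sin (θ k)) * Real.cos (θ i)
            + (if k = i then ∑ l, Real.sin (θ l) * (Λ i l * Real.cos (θ i)) else 0) := by
        intro k
        rw [Finset.sum_add_distrib]
        congr 1
        · simp [mul_ite, Finset.sum_ite_eq']
        · by_cases hk : k = i
          · subst hk; simp
          · simp [hk]
      simp only [step]
      rw [Finset.sum_add_distrib, Finset.sum_ite_eq' Finset.univ i, if_pos (Finset.mem_univ i)]
      have hs1 : ∑ k, (Λ k i * Real.sin (θ k)) * Real.cos (θ i)
          = Real.cos (θ i) * ∑ l, Λ i l * Real.sin (θ l) := by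
        rw [Finset.mul_sum]
        exact Finset.sum_congr rfl fun k _ => by rw [hsymm.apply i k]; ring
      have hs2 : ∑ l, Real.sin (θ l) * (Λ i l * Real.cos (θ i))
          = Real.cos (θ i) * ∑ l, Λ i l * Real.sin (θ l) := by
        rw [Finset.mul_sum]
        exact Finset.sum_congr rfl fun k _ => by ring
      rw [hs1, hs2]; ring
    rw [e1, e2]
    ring
  -- the key scalar identity
  have key : ∀ θ : Fin d → ℝ,
      ∑ k, α k * (-(κ k * Real.sin (θ k)) + Real.cos (θ k) * ∑ l, Λ k l * Real.sin (θ l))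
        = ∑ k, β k * Real.sin (θ k) := by
    intro θ
    have h0 := h θ
    simp only [hder] at h0
    have h1 : f θ * ∑ k, α k * (-(κ k * Real.sin (θ k)) + Real.cos (θ k) * ∑ l, Λ k l * Real.sin (θ l))
        = f θ * ∑ k, β k * Real.sin (θ k) := by
      rw [← h0, Finset.mul_sum]
      exact Finset.sum_congr rfl fun k _ => by ring
    exact mul_left_cancel₀ (ne_of_gt (hfpos θ)) h1
  have hα : ∀ i, α i = 0 := by
    intro i
    obtain ⟨j, hji, hΛ⟩ := hrow i
    have hij : i ≠ j := fun e => hji e.symm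
    set θa : Fin d → ℝ := fun k => if k = j then π/2 else 0 with hθa
    set θb : Fin d → ℝ := fun k => if k = j then π/2 else if k = i then π else 0 with hθb
    have hsa : ∀ k, Real.sin (θa k) = if k = j then 1 else 0 := by
      intro k; rw [hθa]; by_cases hk : k = j <;> simp [hk]
    have hca : ∀ k, Real.cos (θa k) = if k = j then 0 else 1 := by
      intro k; rw [hθa]; by_cases hk : k = j <;> simp [hk]
    have hsb : ∀ k, Real.sin (θb k) = if k = j then 1 else 0 := by
      intro k; rw [hθb]
      by_cases hk : k = j
      · simp [hk]
      · by_cases hk' : k = i <;> simp [hk, hk', hij]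
    have hcb : ∀ k, Real.cos (θb k) = if k = j then 0 else if k = i then -1 else 1 := by
      intro k; rw [hθb]
      by_cases hk : k = j
      · simp [hk]
      · by_cases hk' : k = i <;> simp [hk, hk', hij]
    have ka := key θa
    have kb := key θb
    simp only [hsa, hca] at ka
    simp only [hsb, hcb] at kb
    have hRHS : (∑ k, β k * (if k = j then (1:ℝ) else 0)) = β j := by
      simp [mul_ite, Finset.sum_ite_eq']
    rw [hRHS] at ka kb
    have hdiff : (∑ k, α k * (-(κ k * (if k = j then (1:ℝ) else 0)) +
          (if k = j then (0:ℝ) else 1) * ∑ l, Λ k l * (if l = j then (1:ℝ) else 0)))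
        - (∑ k, α k * (-(κ k * (if k = j then (1:ℝ) else 0)) +
          (if k = j then (0:ℝ) else if k = i then -1 else 1) * ∑ l, Λ k l * (if l = j then (1:ℝ) else 0)))
        = 2 * (α i * Λ i j) := by
      rw [← Finset.sum_sub_distrib]
      have hterm : ∀ k : Fin d, α k * (-(κ k * (if k = j then (1:ℝ) else 0)) +
            (if k = j then (0:ℝ) else 1) * ∑ l, Λ k l * (if l = j then (1:ℝ) else 0))
          - α k * (-(κ k * (if k = j then (1:ℝ) else 0)) +
            (if k = j then (0:ℝ) else if k = i then -1 else 1) * ∑ l, Λ k l * (if l = j then (1:ℝ) else 0))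
          = if k = i then 2 * (α i * Λ i j) else 0 := by
        intro k
        have hsum : (∑ l, Λ k l * (if l = j then (1:ℝ) else 0)) = Λ k j := by
          simp [mul_ite, Finset.sum_ite_eq']
        rw [hsum]
        by_cases hk : k = i
        · subst hk; simp [hij]; ring
        · by_cases hk' : k = j <;> simp [hk, hk', hji] <;> ring
      rw [Finset.sum_congr rfl fun k _ => hterm k]
      simp [Finset.sum_ite_eq']
    rw [ka, kb, sub_self] at hdiff
    have : α i * Λ i j = 0 := by linarith
    rcases mul_eq_zero.1 this with h' | h'
    · exact h'
    · exact absurd h' hΛ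
  have hβ : ∀ i, β i = 0 := by
    intro i
    set θc : Fin d → ℝ := fun k => if k = i then π/2 else 0 with hθc
    have kc := key θc
    simp only [hα, zero_mul, Finset.sum_const_zero] at kc
    have hsc : ∀ k, Real.sin (θc k) = if k = i then 1 else 0 := by
      intro k; rw [hθc]; by_cases hk : k = i <;> simp [hk]
    rw [Finset.sum_congr rfl fun k _ => by rw [hsc k]] at kc
    simp [mul_ite, Finset.sum_ite_eq'] at kc
    exact kc.symm
  exact ⟨funext fun i => hα i, funext fun i => hβ i⟩
end

section
/- Let d ≥ 2, κ ∈ ℝ^d, and let Δ ∈ ℝ^{d×d} be symmetric with Δ_{ii} = 0 for all i. Let C > 0 and define the multivariate Cosine density f(θ) = C · exp(Σ_{i=1}^d κᵢ cos(θᵢ) − Σ_{j=1}^d Σ_{k=1, k≠j}^d Δ_{jk} cos(θₖ − θⱼ)) for θ ∈ ℝ^d. Then for all θ ∈ ℝ^d, Σ_{i=1}^d ∂f/∂θᵢ(θ) = −f(θ) · Σ_{i=1}^d κᵢ sin(θᵢ); that is, the sine-skewing score dependence equation Σᵢ αᵢ ∂f/∂θᵢ = f Σᵢ βᵢ sin(θᵢ)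 holds with α = (1,…,1) and β = −κ. -/
set_option maxHeartbeats 800000


theorem stmt13 (d : ℕ) (hd : 2 ≤ d) (κ : Fin d → ℝ)
    (Δ : Matrix (Fin d) (Fin d) ℝ) (hsymm : Δ.IsSymm) (hdiag : ∀ i, Δ i i = 0)
    (C : ℝ) (hC : 0 < C) (f : (Fin d → ℝ) → ℝ)
    (hf : ∀ θ : Fin d → ℝ, f θ = C * Real.exp (∑ i, κ i * Real.cos (θ i) -
      ∑ j, ∑ k ∈ Finset.univ.erase j, Δ j k * Real.cos (θ k - θ j))) :
    ∀ θ : Fin d → ℝ,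
      ∑ i, fderiv ℝ f θ (Pi.single i 1) = -(f θ * ∑ i, κ i * Real.sin (θ i)) := by
  have hfe : f = fun θ : Fin d → ℝ => C * Real.exp (∑ i, κ i * Real.cos (θ i) -
      ∑ j, ∑ k ∈ Finset.univ.erase j, Δ j k * Real.cos (θ k - θ j)) := funext hf
  intro θ
  set S : ℝ := ∑ j, ∑ k ∈ Finset.univ.erase j, Δ j k * Real.cos (θ k - θ j) with hS
  have hdiff : DifferentiableAt ℝ f θ := by
    rw [hfe]; fun_prop
  -- sum of basis directional derivatives equals derivative along (1,...,1)
  have hsum : ∑ i, fderiv ℝ f θ (Pi.single i 1) = fderiv ℝ f θ (fun _ => (1:ℝ)) := by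
    rw [← map_sum]
    congr 1
    exact Finset.univ_sum_single (fun _ => (1:ℝ))
  set c : Fin d → ℝ := fun _ => (1:ℝ) with hc
  set g : ℝ → ℝ := fun t => f (θ + t • c) with hg
  have hL : HasDerivAt (fun t : ℝ => θ + t • c) c 0 := by
    have h1 : HasDerivAt (fun t : ℝ => t • c) ((1:ℝ) • c) 0 :=
      (hasDerivAt_id 0).smul_const c
    simpa using h1.const_add θ
  have hg1 : HasDerivAt g (fderiv ℝ f θ c) 0 := by
    have hF : HasFDerivAt f (fderiv ℝ f θ) (θ + (0:ℝ) • c) := by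
      simpa using hdiff.hasFDerivAt
    exact hF.comp_hasDerivAt 0 hL
  have hg2 : HasDerivAt g (-(f θ * ∑ i, κ i * Real.sin (θ i))) 0 := by
    have hgeq : g = fun t => C * Real.exp ((∑ i, κ i * Real.cos (θ i + t)) - S) := by
      funext t
      show f (θ + t • c) = C * Real.exp ((∑ i, κ i * Real.cos (θ i + t)) - S)
      rw [hf]
      have hv : ∀ i, (θ + t • c) i = θ i + t := fun i => by
        simp [hc]
      simp only [hv]
      have h2 : ∑ j, ∑ k ∈ Finset.univ.erase j, Δ j k * Real.cos ((θ k + t) - (θ j + t)) = S := by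
        rw [hS]
        refine Finset.sum_congr rfl fun j _ => Finset.sum_congr rfl fun k _ => ?_
        congr 1
        ring
      rw [h2]
    rw [hgeq]
    have hA : HasDerivAt (fun t : ℝ => ∑ i, κ i * Real.cos (θ i + t))
        (∑ i, κ i * (-Real.sin (θ i + 0) * 1)) 0 := by
      refine HasDerivAt.fun_sum (fun i _ => ?_)
      have h1 : HasDerivAt (fun t : ℝ => θ i + t) 1 0 := by
        simpa using (hasDerivAt_id (0:ℝ)).const_add (θ i)
      exact ((Real.hasDerivAt_cos (θ i + 0)).comp 0 h1).const_mul (κ i)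
    have hE : HasDerivAt (fun t : ℝ => (∑ i, κ i * Real.cos (θ i + t)) - S)
        (∑ i, κ i * (-Real.sin (θ i + 0) * 1)) 0 := hA.sub_const S
    have := (hE.exp).const_mul C
    refine this.congr_deriv ?_
    rw [hf θ, ← hS]
    simp only [add_zero, mul_one, mul_neg, Finset.sum_neg_distrib]
    ring
  rw [hsum, hg1.unique hg2]
end

section
/- Let c > 0 and c₀, c₁, c₂, c₃, c₄ ∈ ℝ with c₁ > 0 and c₂ > 0, and suppose D(θ₁, θ₂) := c₀ − c₁ cos(θ₁) − c₂ cos(θ₂) − c₃ cos(θ₁) cos(θ₂) − c₄ sin(θ₁) sin(θ₂) > 0 for all (θ₁, θ₂) ∈ ℝ². Define the bivariate wrapped Cauchy density f(θ₁, θ₂) = c / D(θ₁, θ₂). If α₁, α₂, β₁, β₂ ∈ ℝ satisfy α₁ ∂f/∂θ₁(θ) + α₂ ∂f/∂θ₂(θ) = f(θ) (β₁ sin(θ₁) + β₂ sin(θ₂)) for all θ = (θ₁, θ₂) ∈ ℝ², then α₁ = α₂ = β₁ = β₂ = 0. -/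
theorem stmt14 (c c₀ c₁ c₂ c₃ c₄ : ℝ) (hc : 0 < c) (hc₁ : 0 < c₁) (hc₂ : 0 < c₂)
    (D : ℝ → ℝ → ℝ)
    (hD : ∀ θ₁ θ₂ : ℝ, D θ₁ θ₂ = c₀ - c₁ * Real.cos θ₁ - c₂ * Real.cos θ₂ -
      c₃ * Real.cos θ₁ * Real.cos θ₂ - c₄ * Real.sin θ₁ * Real.sin θ₂)
    (hDpos : ∀ θ₁ θ₂ : ℝ, 0 < D θ₁ θ₂)
    (f : ℝ → ℝ → ℝ) (hf : ∀ θ₁ θ₂ : ℝ, f θ₁ θ₂ = c / D θ₁ θ₂)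
    (α₁ α₂ β₁ β₂ : ℝ)
    (h : ∀ θ₁ θ₂ : ℝ,
      α₁ * deriv (fun s => f s θ₂) θ₁ + α₂ * deriv (fun s => f θ₁ s) θ₂ =
        f θ₁ θ₂ * (β₁ * Real.sin θ₁ + β₂ * Real.sin θ₂)) :
    α₁ = 0 ∧ α₂ = 0 ∧ β₁ = 0 ∧ β₂ = 0 := by
  have key : ∀ θ₁ θ₂ : ℝ,
      α₁ * (c₁ * Real.sin θ₁ + c₃ * Real.sin θ₁ * Real.cos θ₂ - c₄ * Real.cos θ₁ * Real.sin θ₂)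
      + α₂ * (c₂ * Real.sin θ₂ + c₃ * Real.cos θ₁ * Real.sin θ₂ - c₄ * Real.sin θ₁ * Real.cos θ₂)
      + (c₀ - c₁ * Real.cos θ₁ - c₂ * Real.cos θ₂ - c₃ * Real.cos θ₁ * Real.cos θ₂
          - c₄ * Real.sin θ₁ * Real.sin θ₂) * (β₁ * Real.sin θ₁ + β₂ * Real.sin θ₂) = 0 := by
    have hc0 : c ≠ 0 := ne_of_gt hc
    intro θ₁ θ₂
    have hDne : D θ₁ θ₂ ≠ 0 := ne_of_gt (hDpos θ₁ θ₂)
    have hDv : c₀ - c₁ * Real.cos θ₁ - c₂ * Real.cos θ₂ - c₃ * Real.cos θ₁ * Real.cos θ₂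
        - c₄ * Real.sin θ₁ * Real.sin θ₂ ≠ 0 := by rw [← hD]; exact hDne
    have hg1 : HasDerivAt (fun s => c₀ - c₁ * Real.cos s - c₂ * Real.cos θ₂ -
        c₃ * Real.cos s * Real.cos θ₂ - c₄ * Real.sin s * Real.sin θ₂)
        (c₁ * Real.sin θ₁ + c₃ * Real.sin θ₁ * Real.cos θ₂ - c₄ * Real.cos θ₁ * Real.sin θ₂) θ₁ := by
      have hcos := Real.hasDerivAt_cos θ₁
      have hsin := Real.hasDerivAt_sin θ₁
      have := ((((hasDerivAt_const θ₁ c₀).sub (hcos.const_mul c₁)).sub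
          (hasDerivAt_const θ₁ (c₂ * Real.cos θ₂))).sub
          ((hcos.const_mul c₃).mul_const (Real.cos θ₂))).sub
          ((hsin.const_mul c₄).mul_const (Real.sin θ₂))
      exact this.congr_deriv (by ring)
    have hg2 : HasDerivAt (fun s => c₀ - c₁ * Real.cos θ₁ - c₂ * Real.cos s -
        c₃ * Real.cos θ₁ * Real.cos s - c₄ * Real.sin θ₁ * Real.sin s)
        (c₂ * Real.sin θ₂ + c₃ * Real.cos θ₁ * Real.sin θ₂ - c₄ * Real.sin θ₁ * Real.cos θ₂) θ₂ := by
      have hcos := Real.hasDerivAt_cos θ₂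
      have hsin := Real.hasDerivAt_sin θ₂
      have := ((((hasDerivAt_const θ₂ c₀).sub (hasDerivAt_const θ₂ (c₁ * Real.cos θ₁))).sub
          (hcos.const_mul c₂)).sub
          (hcos.const_mul (c₃ * Real.cos θ₁))).sub (hsin.const_mul (c₄ * Real.sin θ₁))
      exact this.congr_deriv (by ring)
    -- rewrite derivatives
    have hfun1 : (fun s => f s θ₂) = fun s => c / (c₀ - c₁ * Real.cos s - c₂ * Real.cos θ₂ -
        c₃ * Real.cos s * Real.cos θ₂ - c₄ * Real.sin s * Real.sin θ₂) :=
      funext fun s => by rw [hf, hD]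
    have hfun2 : (fun s => f θ₁ s) = fun s => c / (c₀ - c₁ * Real.cos θ₁ - c₂ * Real.cos s -
        c₃ * Real.cos θ₁ * Real.cos s - c₄ * Real.sin θ₁ * Real.sin s) :=
      funext fun s => by rw [hf, hD]
    have hd1 := ((hasDerivAt_const θ₁ c).div hg1 hDv).deriv
    have hd2 := ((hasDerivAt_const θ₂ c).div hg2 hDv).deriv
    have heq := h θ₁ θ₂
    simp only [Pi.div_def] at hd1 hd2
    rw [hfun1, hfun2, hd1, hd2, hf, hD] at heq
    set dv : ℝ := c₀ - c₁ * Real.cos θ₁ - c₂ * Real.cos θ₂ - c₃ * Real.cos θ₁ * Real.cos θ₂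
        - c₄ * Real.sin θ₁ * Real.sin θ₂ with hdv
    set e1 : ℝ := c₁ * Real.sin θ₁ + c₃ * Real.sin θ₁ * Real.cos θ₂ - c₄ * Real.cos θ₁ * Real.sin θ₂
    set e2 : ℝ := c₂ * Real.sin θ₂ + c₃ * Real.cos θ₁ * Real.sin θ₂ - c₄ * Real.sin θ₁ * Real.cos θ₂
    set B : ℝ := β₁ * Real.sin θ₁ + β₂ * Real.sin θ₂
    clear_value dv e1 e2 B
    field_simp at heq
    have key0 : c * dv ^ 3 * (α₁ * e1 + α₂ * e2 + dv * B) = 0 := by linear_combination -dv ^ 3 * heq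
    exact (mul_eq_zero.mp key0).resolve_left (mul_ne_zero hc0 (pow_ne_zero _ hDv))
  have hr : (Real.sqrt 2 / 2) ^ 2 = 1 / 2 := by
    rw [div_pow, Real.sq_sqrt (by norm_num : (0:ℝ) ≤ 2)]
    norm_num
  have eA := key (Real.pi / 2) 0
  have eB := key (Real.pi / 2) Real.pi
  have eC := key 0 (Real.pi / 2)
  have eD := key Real.pi (Real.pi / 2)
  have eP1 := key (Real.pi / 4) 0
  have eP2 := key (Real.pi - Real.pi / 4) 0
  have eP3 := key (Real.pi / 4) Real.pi
  have eP4 := key (Real.pi - Real.pi / 4) Real.pi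
  have eQ1 := key 0 (Real.pi / 4)
  have eQ2 := key 0 (Real.pi - Real.pi / 4)
  have eQ3 := key Real.pi (Real.pi / 4)
  have eQ4 := key Real.pi (Real.pi - Real.pi / 4)
  simp only [Real.sin_pi_div_two, Real.cos_pi_div_two, Real.sin_zero, Real.cos_zero,
    Real.sin_pi, Real.cos_pi, Real.sin_pi_div_four, Real.cos_pi_div_four,
    Real.sin_pi_sub, Real.cos_pi_sub] at eA eB eC eD eP1 eP2 eP3 eP4 eQ1 eQ2 eQ3 eQ4
  have b1p : β₁ * (c₁ + c₃) = 0 := by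
    linear_combination eP2 - eP1 - 2 * (β₁ * (c₁ + c₃)) * hr
  have b1m : β₁ * (c₁ - c₃) = 0 := by
    linear_combination eP4 - eP3 - 2 * (β₁ * (c₁ - c₃)) * hr
  have b2p : β₂ * (c₂ + c₃) = 0 := by
    linear_combination eQ2 - eQ1 - 2 * (β₂ * (c₂ + c₃)) * hr
  have b2m : β₂ * (c₂ - c₃) = 0 := by
    linear_combination eQ4 - eQ3 - 2 * (β₂ * (c₂ - c₃)) * hr
  have hb1 : β₁ = 0 := by
    have : β₁ * c₁ = 0 := by linear_combination (b1p + b1m) / 2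
    exact (mul_eq_zero.mp this).resolve_right (ne_of_gt hc₁)
  have hb2 : β₂ = 0 := by
    have : β₂ * c₂ = 0 := by linear_combination (b2p + b2m) / 2
    exact (mul_eq_zero.mp this).resolve_right (ne_of_gt hc₂)
  have ha1 : α₁ = 0 := by
    have : α₁ * c₁ = 0 := by linear_combination (eA + eB) / 2 - c₀ * hb1
    exact (mul_eq_zero.mp this).resolve_right (ne_of_gt hc₁)
  have ha2 : α₂ = 0 := by
    have : α₂ * c₂ = 0 := by linear_combination (eC + eD) / 2 - c₀ * hb2
    exact (mul_eq_zero.mp this).resolve_right (ne_of_gt hc₂)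
  exact ⟨ha1, ha2, hb1, hb2⟩
end

section
/- Let f₀ : ℝ² → (0, ∞) be continuous, 2π-periodic in each coordinate, and even (f₀(−θ) = f₀(θ) for all θ), and let m be a positive integer and μ ∈ ℝ². For λ = (λ₁, λ₂) ∈ ℝ² with |λ₁| + |λ₂| ≤ 1, define g_λ(θ) = f₀(θ − μ) · ((1 + λ₁ sin(θ₁ − μ₁) + λ₂ sin(θ₂ − μ₂))/2)^m and the normalized density p_λ(θ) = g_λ(θ) / ∫_{[−π,π]²} g_λ(η) dη. Then for each j ∈ {1, 2} and each fixed θ ∈ ℝ², the map λ ↦ log p_λ(θ) has partial derivative with respect to λⱼ at λ = 0 equal to m · sin(θⱼ − μⱼ). -/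
open Real MeasureTheory intervalIntegral


lemma aux_key (F2 : ℝ → ℝ → ℝ)
    (hev : ∀ a b, F2 (-a) (-b) = F2 a b)
    (hp1 : ∀ a b, F2 (a + 2 * π) b = F2 a b)
    (hp2 : ∀ a b, F2 a (b + 2 * π) = F2 a b) (c d : ℝ) :
    (∫ x in (-π)..π, (∫ y in (-π)..π, F2 (x - c) (y - d)) * Real.sin (x - c)) = 0 := by
  set φ : ℝ → ℝ := fun x => ∫ y in (-π)..π, F2 (x - c) (y - d) with hφ
  set Ψ : ℝ → ℝ := fun x => φ x * Real.sin (x - c) with hΨ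
  have hφeven : ∀ x, φ (2 * c - x) = φ x := by
    intro x
    have h1 : ∀ y : ℝ, F2 (2 * c - x - c) (y - d) = F2 (x - c) (d - y) := by
      intro y
      have := hev (x - c) (d - y)
      simpa [show -(x - c) = 2 * c - x - c by ring, show -(d - y) = y - d by ring] using this
    have h2 : φ (2 * c - x) = ∫ y in (-π)..π, F2 (x - c) (d - y) := by
      simp only [hφ, h1]
    rw [h2, intervalIntegral.integral_comp_sub_left (fun y => F2 (x - c) y) d]
    have h3 : φ x = ∫ y in (-π - d)..(π - d), F2 (x - c) y := by
      simp only [hφ]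
      rw [intervalIntegral.integral_comp_sub_right (fun y => F2 (x - c) y) d]
    rw [h3]
    have hper : Function.Periodic (fun y => F2 (x - c) y) (2 * π) := fun y => hp2 _ y
    have := hper.intervalIntegral_add_eq (d - π) (-π - d)
    rw [show d - π + 2 * π = d + π by ring, show -π - d + 2 * π = π - d by ring] at this
    simpa [sub_neg_eq_add] using this
  have hΨper : Function.Periodic Ψ (2 * π) := by
    intro x
    have h1 : φ (x + 2 * π) = φ x := by
      simp only [hφ]
      congr 1
      funext y
      rw [show x + 2 * π - c = (x - c) + 2 * π by ring, hp1]
    simp only [hΨ, h1, show x + 2 * π - c = (x - c) + 2 * π by ring, Real.sin_add_two_pi]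
  have hΨodd : ∀ x, Ψ (2 * c - x) = -Ψ x := by
    intro x
    simp only [hΨ, hφeven, show 2 * c - x - c = -(x - c) by ring, Real.sin_neg]
    ring
  have key : (∫ x in (c - π)..(c + π), Ψ x) = 0 := by
    have h1 : (∫ x in (c - π)..(c + π), Ψ (2 * c - x)) = ∫ x in (c - π)..(c + π), Ψ x := by
      rw [intervalIntegral.integral_comp_sub_left Ψ (2 * c)]
      rw [show 2 * c - (c + π) = c - π by ring, show 2 * c - (c - π) = c + π by ring]
    have h2 : (∫ x in (c - π)..(c + π), Ψ (2 * c - x)) = -∫ x in (c - π)..(c + π), Ψ x := by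
      simp only [hΨodd]
      exact intervalIntegral.integral_neg
    linarith [h1, h2.symm.trans h1]
  have := hΨper.intervalIntegral_add_eq (-π) (c - π)
  rw [show -π + 2 * π = π by ring, show c - π + 2 * π = c + π by ring] at this
  rw [this, key]


lemma aux_Kint (f₀ : (Fin 2 → ℝ) → ℝ) (hcont : Continuous f₀)
    (hper : ∀ (θ : Fin 2 → ℝ) (i : Fin 2), f₀ (θ + Pi.single i (2 * π)) = f₀ θ)
    (heven : ∀ θ, f₀ (-θ) = f₀ θ) (μ : Fin 2 → ℝ) (j : Fin 2) :
    ∫ η in (Set.Icc (fun _ => -π) (fun _ => π) : Set (Fin 2 → ℝ)),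
      f₀ (η - μ) * Real.sin (η j - μ j) = 0 := by
  have hle : (-π : ℝ) ≤ π := by linarith [Real.pi_pos]
  set F2 : ℝ → ℝ → ℝ := fun x y => f₀ ![x, y] with hF2
  have hvec : ∀ η : Fin 2 → ℝ, (![η 0, η 1] : Fin 2 → ℝ) = η := by
    intro η; funext i; fin_cases i <;> rfl
  have hsub : ∀ x y : ℝ, (![x, y] : Fin 2 → ℝ) - μ = ![x - μ 0, y - μ 1] := by
    intro x y; funext i; fin_cases i <;> simp
  have hm : Continuous (fun p : ℝ × ℝ => (![p.1, p.2] : Fin 2 → ℝ)) := by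
    apply continuous_pi; intro i
    fin_cases i
    · simpa using continuous_fst
    · simpa using continuous_snd
  have hF2c : Continuous fun p : ℝ × ℝ => F2 p.1 p.2 := hcont.comp hm
  have hF2e : ∀ x y, F2 (-x) (-y) = F2 x y := by
    intro x y
    have h : (![-x, -y] : Fin 2 → ℝ) = -![x, y] := by funext i; fin_cases i <;> simp
    simp only [hF2, h, heven]
  have hF2p1 : ∀ x y, F2 (x + 2 * π) y = F2 x y := by
    intro x y
    have h : (![x + 2 * π, y] : Fin 2 → ℝ) = ![x, y] + Pi.single 0 (2 * π) := by
      funext i; fin_cases i <;> simp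
    simp only [hF2, h, hper]
  have hF2p2 : ∀ x y, F2 x (y + 2 * π) = F2 x y := by
    intro x y
    have h : (![x, y + 2 * π] : Fin 2 → ℝ) = ![x, y] + Pi.single 1 (2 * π) := by
      funext i; fin_cases i <;> simp
    simp only [hF2, h, hper]
  set S : Set (ℝ × ℝ) := Set.Icc (-π) π ×ˢ Set.Icc (-π) π with hS
  set e := MeasurableEquiv.piFinTwo (fun _ : Fin 2 => ℝ) with he
  have hK : (Set.Icc (fun _ => -π) (fun _ => π) : Set (Fin 2 → ℝ)) = e ⁻¹' S := by
    ext x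
    simp only [hS, he, Set.mem_Icc, Set.mem_preimage, Set.mem_prod,
      MeasurableEquiv.piFinTwo_apply, Pi.le_def, Fin.forall_fin_two]
    tauto
  set G : ℝ × ℝ → ℝ := fun p => f₀ (![p.1, p.2] - μ) * Real.sin (![p.1, p.2] j - μ j) with hG
  have hGe : ∀ η : Fin 2 → ℝ, f₀ (η - μ) * Real.sin (η j - μ j) = G (e η) := by
    intro η
    simp only [hG, he, MeasurableEquiv.piFinTwo_apply, hvec]
  have htrans := (volume_preserving_piFinTwo (fun _ : Fin 2 => ℝ)).setIntegral_preimage_emb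
    e.measurableEmbedding G S
  rw [hK]
  simp only [hGe]
  rw [htrans]
  have hGc : Continuous G :=
    (hcont.comp (hm.sub continuous_const)).mul
      (Real.continuous_sin.comp (((continuous_apply j).comp hm).sub continuous_const))
  have hGint : IntegrableOn G S := hGc.continuousOn.integrableOn_compact
    (isCompact_Icc.prod isCompact_Icc)
  rw [hS, Measure.volume_eq_prod ℝ ℝ] at hGint ⊢
  rw [setIntegral_prod G hGint]
  fin_cases j
  · have hGxy : ∀ x y : ℝ, G (x, y) = F2 (x - μ 0) (y - μ 1) * Real.sin (x - μ 0) := by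
      intro x y; simp only [hG, hsub]; rfl
    simp only [hGxy]
    simp only [integral_Icc_eq_integral_Ioc, ← intervalIntegral.integral_of_le hle]
    simp only [intervalIntegral.integral_mul_const]
    exact aux_key F2 hF2e hF2p1 hF2p2 (μ 0) (μ 1)
  · have hGxy : ∀ x y : ℝ, G (x, y) = F2 (x - μ 0) (y - μ 1) * Real.sin (y - μ 1) := by
      intro x y; simp only [hG, hsub]; rfl
    have hswap : (∫ x in Set.Icc (-π) π, ∫ y in Set.Icc (-π) π, G (x, y)) =
        ∫ y in Set.Icc (-π) π, ∫ x in Set.Icc (-π) π, G (x, y) := by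
      apply integral_integral_swap
      rw [Function.uncurry_def]
      rw [Measure.prod_restrict]
      exact hGint
    rw [hswap]
    simp only [hGxy]
    simp only [integral_Icc_eq_integral_Ioc, ← intervalIntegral.integral_of_le hle]
    simp only [intervalIntegral.integral_mul_const]
    exact aux_key (fun a b => F2 b a) (fun a b => hF2e b a) (fun a b => hF2p2 b a)
      (fun a b => hF2p1 b a) (μ 1) (μ 0)


set_option maxHeartbeats 1000000 in
theorem stmt17 (f₀ : (Fin 2 → ℝ) → ℝ) (hpos : ∀ θ, 0 < f₀ θ)
    (hcont : Continuous f₀)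
    (hper : ∀ (θ : Fin 2 → ℝ) (i : Fin 2), f₀ (θ + Pi.single i (2 * π)) = f₀ θ)
    (heven : ∀ θ, f₀ (-θ) = f₀ θ)
    (m : ℕ) (hm : 1 ≤ m) (μ : Fin 2 → ℝ)
    (g : (Fin 2 → ℝ) → (Fin 2 → ℝ) → ℝ)
    (hg : ∀ (lam θ : Fin 2 → ℝ), g lam θ = f₀ (θ - μ) *
      ((1 + lam 0 * Real.sin (θ 0 - μ 0) + lam 1 * Real.sin (θ 1 - μ 1)) / 2) ^ m) :
    ∀ (j : Fin 2) (θ : Fin 2 → ℝ), HasDerivAt (fun s : ℝ =>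
      Real.log (g (Pi.single j s) θ /
        ∫ η in (Set.Icc (fun _ => -π) (fun _ => π) : Set (Fin 2 → ℝ)),
          g (Pi.single j s) η))
      (m * Real.sin (θ j - μ j)) 0 := by
  intro j θ
  have hπ : (0 : ℝ) < π := Real.pi_pos
  set K : Set (Fin 2 → ℝ) := Set.Icc (fun _ => -π) (fun _ => π) with hKdef
  have hgj : ∀ (s : ℝ) (η : Fin 2 → ℝ), g (Pi.single j s) η =
      f₀ (η - μ) * ((1 + s * Real.sin (η j - μ j)) / 2) ^ m := by
    intro s η
    rw [hg]
    fin_cases j <;> simp [Pi.single_apply]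
  set F : ℝ → (Fin 2 → ℝ) → ℝ :=
    fun s η => f₀ (η - μ) * ((1 + s * Real.sin (η j - μ j)) / 2) ^ m with hF
  set F' : ℝ → (Fin 2 → ℝ) → ℝ := fun s η => f₀ (η - μ) *
    ((m : ℝ) * ((1 + s * Real.sin (η j - μ j)) / 2) ^ (m - 1) *
      (Real.sin (η j - μ j) / 2)) with hF'
  have hsin : ∀ η : Fin 2 → ℝ, |Real.sin (η j - μ j)| ≤ 1 :=
    fun η => abs_le.2 ⟨Real.neg_one_le_sin _, Real.sin_le_one _⟩
  have hderiv : ∀ (s : ℝ) (η : Fin 2 → ℝ), HasDerivAt (fun t => F t η) (F' s η) s := by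
    intro s η
    have h1 : HasDerivAt (fun t : ℝ => (1 + t * Real.sin (η j - μ j)) / 2)
        (Real.sin (η j - μ j) / 2) s := by
      simpa using (((hasDerivAt_id s).mul_const (Real.sin (η j - μ j))).const_add 1).div_const 2
    exact HasDerivAt.const_mul (f₀ (η - μ)) (h1.pow m)
  have hcsub : Continuous (fun η : Fin 2 → ℝ => f₀ (η - μ)) :=
    hcont.comp (continuous_id.sub continuous_const)
  have hsincont : Continuous (fun η : Fin 2 → ℝ => Real.sin (η j - μ j)) :=
    Real.continuous_sin.comp ((continuous_apply j).sub continuous_const)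
  have hKcomp : IsCompact K := isCompact_Icc
  have hKmeas : MeasurableSet K := measurableSet_Icc
  have hKne : K.Nonempty := by
    refine ⟨fun _ => 0, ?_⟩
    simp only [hKdef, Set.mem_Icc, Pi.le_def]
    constructor <;> intro i <;> linarith
  obtain ⟨x₀, hx₀K, hub⟩ := hKcomp.exists_isMaxOn hKne hcsub.continuousOn
  obtain ⟨x₁, hx₁K, hlb⟩ := hKcomp.exists_isMinOn hKne hcsub.continuousOn
  set C := f₀ (x₀ - μ) with hCdef
  have hC0 : 0 < C := hpos _
  have hFcont : ∀ s, Continuous (F s) := by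
    intro s
    exact hcsub.mul (((continuous_const.add (continuous_const.mul hsincont)).div_const 2).pow m)
  have hF'cont : Continuous (F' 0) := by
    exact hcsub.mul ((continuous_const.mul
      (((continuous_const.add (continuous_const.mul hsincont)).div_const 2).pow (m - 1))).mul
      (hsincont.div_const 2))
  have hint : ∀ s, IntegrableOn (F s) K := fun s =>
    (hFcont s).continuousOn.integrableOn_compact hKcomp
  have hIderiv : HasDerivAt (fun s => ∫ η in K, F s η) (∫ η in K, F' 0 η) 0 := by
    refine (hasDerivAt_integral_of_dominated_loc_of_deriv_le (s := Metric.ball 0 1) (bound := fun _ => C * m) (Metric.ball_mem_nhds 0 one_pos)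
      (Filter.Eventually.of_forall fun s => (hFcont s).aestronglyMeasurable)
      (hint 0) hF'cont.aestronglyMeasurable
      (ae_restrict_of_forall_mem hKmeas ?_) ?_
      (Filter.Eventually.of_forall fun η s _ => hderiv s η)).2
    · intro η hη s hs
      have hs1 : |s| ≤ 1 := by
        have := Metric.mem_ball.1 hs
        rw [Real.dist_eq, sub_zero] at this
        linarith [this]
      have h1 : |s * Real.sin (η j - μ j)| ≤ 1 := by
        rw [abs_mul]
        calc |s| * |Real.sin (η j - μ j)| ≤ 1 * 1 :=
              mul_le_mul hs1 (hsin η) (abs_nonneg _) zero_le_one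
          _ = 1 := one_mul 1
      have hX : |1 + s * Real.sin (η j - μ j)| ≤ 2 :=
        (abs_add_le _ _).trans (by rw [abs_one]; linarith)
      have hB : |(1 + s * Real.sin (η j - μ j)) / 2| ≤ 1 := by
        rw [abs_div, abs_two]; linarith
      have hBpow : |(1 + s * Real.sin (η j - μ j)) / 2| ^ (m - 1) ≤ 1 :=
        pow_le_one₀ (abs_nonneg _) hB
      have hf0 : |f₀ (η - μ)| = f₀ (η - μ) := abs_of_pos (hpos _)
      have hm0 : (0 : ℝ) ≤ m := Nat.cast_nonneg m
      have hA2 : |Real.sin (η j - μ j) / 2| ≤ 1 / 2 := by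
        rw [abs_div, abs_two]; linarith [hsin η]
      calc ‖F' s η‖ = f₀ (η - μ) * ((m : ℝ) *
            |(1 + s * Real.sin (η j - μ j)) / 2| ^ (m - 1) *
            |Real.sin (η j - μ j) / 2|) := by
            rw [hF', Real.norm_eq_abs, abs_mul, hf0, abs_mul, abs_mul, Nat.abs_cast, abs_pow]
        _ ≤ C * ((m : ℝ) * 1 * (1 / 2)) := by
            gcongr <;>
              first
              | exact (hpos _).le
              | exact hub hη
              | exact hBpow
              | exact hA2
              | positivity
        _ ≤ C * m := by nlinarith [mul_nonneg hC0.le hm0]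
    · exact (integrableOn_const hKcomp.measure_lt_top.ne)
  have hD : (∫ η in K, F' 0 η) = 0 := by
    have hrw : ∀ η : Fin 2 → ℝ, F' 0 η =
        ((m : ℝ) * (1 / 2) ^ (m - 1) / 2) * (f₀ (η - μ) * Real.sin (η j - μ j)) := by
      intro η
      simp only [hF', zero_mul, add_zero]
      ring
    simp only [hrw]
    rw [MeasureTheory.integral_const_mul, aux_Kint f₀ hcont hper heven μ j, mul_zero]
  have hI : HasDerivAt (fun s => ∫ η in K, F s η) 0 0 := by rw [hD] at hIderiv; exact hIderiv
  have hI0pos : 0 < ∫ η in K, F 0 η := by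
    have hvol : 0 < (volume K).toReal := by
      rw [hKdef, Real.volume_Icc_pi_toReal (fun _ => by linarith)]
      simp only [Finset.prod_const, Finset.card_univ, Fintype.card_fin]
      nlinarith [hπ]
    have hc1 : 0 < f₀ (x₁ - μ) * ((1 : ℝ) / 2) ^ m := mul_pos (hpos _) (by positivity)
    have hge : f₀ (x₁ - μ) * ((1 : ℝ) / 2) ^ m * (volume K).toReal ≤ ∫ η in K, F 0 η := by
      refine setIntegral_ge_of_const_le_real hKmeas hKcomp.measure_lt_top.ne ?_ (hint 0)
      intro η hη
      simp only [hF, zero_mul, add_zero]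
      gcongr
      exact hlb hη
    nlinarith [hge]
  have hN : HasDerivAt (fun s => F s θ) (F' 0 θ) 0 := hderiv 0 θ
  have hF0θ : 0 < F 0 θ := by
    simp only [hF, zero_mul, add_zero]
    exact mul_pos (hpos _) (by positivity)
  have hgoal := (hN.div hI hI0pos.ne').log
    (div_ne_zero hF0θ.ne' hI0pos.ne')
  simp only [hgj]
  convert hgoal using 1
  · rfl
  have hpow : (2 : ℝ) ^ m = 2 ^ (m - 1) * 2 := by
    rw [← pow_succ, Nat.sub_add_cancel hm]
  simp only [hF, zero_mul, add_zero] at hI0pos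
  simp only [hF, hF', zero_mul, add_zero, mul_zero, sub_zero, Pi.div_apply]
  set I0 := ∫ (η : Fin 2 → ℝ) in K, f₀ (η - μ) * (1 / 2) ^ m with hI0
  rw [show m = (m - 1) + 1 from (Nat.sub_add_cancel hm).symm]
  simp only [Nat.add_sub_cancel, pow_succ]
  field_simp [hI0pos.ne', (hpos (θ - μ)).ne']
end
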